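/- Let x, y ∈ ℝ^d such that the segment [x, y] does not contain 0. Define v(t) = (t x + (1−t) y)/|t x + (1−t) y| for t ∈ [0,1] and r(x,y) = ∫₀¹ ((1−t)·1_{[1/2,1]}(t) − t·1_{[0,1/2]}(t)) v'(t) dt. Then |x| − |y| = ⟨v(1/2) + r(x,y), x − y⟩ and |r(x,y)| ≤ 2. -/

import Mathlib

open scoped RealInnerProductSpace
open Set MeasureTheory intervalIntegral

/-- Let `x, y ∈ ℝ^d` with `0` not on the segment `[x,y]`. With
`v(t) = (t•x + (1-t)•y)/‖t•x + (1-t)•y‖` and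
`r = ∫₀¹ ((1-t)·1_{[1/2,1]}(t) - t·1_{[0,1/2]}(t)) • v'(t) dt`, one has
`‖x‖ - ‖y‖ = ⟪v(1/2) + r, x - y⟫` and `‖r‖ ≤ 2`. -/
theorem stmt_5 {d : ℕ} (x y : EuclideanSpace ℝ (Fin d))
    (hseg : (0 : EuclideanSpace ℝ (Fin d)) ∉ segment ℝ x y)
    (v : ℝ → EuclideanSpace ℝ (Fin d))
    (hv : ∀ t : ℝ, v t = ‖t • x + (1 - t) • y‖⁻¹ • (t • x + (1 - t) • y))
    (r : EuclideanSpace ℝ (Fin d))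
    (hr : r = ∫ t in (0:ℝ)..1,
        ((Set.Icc (1/2 : ℝ) 1).indicator (fun s => 1 - s) t
          - (Set.Icc (0 : ℝ) (1/2)).indicator (fun s => s) t) • deriv v t) :
    ‖x‖ - ‖y‖ = ⟪v (1/2) + r, x - y⟫ ∧ ‖r‖ ≤ 2 := by
  set z : EuclideanSpace ℝ (Fin d) := x - y with hz
  set w : ℝ → EuclideanSpace ℝ (Fin d) := fun t => t • x + (1 - t) • y with hwdef
  have hveq : v = fun t => ‖w t‖⁻¹ • w t := by
    funext t; rw [hwdef]; exact hv t
  have hw0 : ∀ t ∈ Icc (0:ℝ) 1, w t ≠ 0 := by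
    intro t ht h
    rw [hwdef] at h
    exact hseg ⟨t, 1 - t, ht.1, by linarith [ht.2], by ring, h⟩
  have hwc : Continuous w := by
    rw [hwdef]
    exact (continuous_id.smul continuous_const).add
      ((continuous_const.sub continuous_id).smul continuous_const)
  -- a positive lower bound for ‖w‖ on [0,1]
  obtain ⟨t₀, ht₀, hmin⟩ := (isCompact_Icc (a := (0:ℝ)) (b := 1)).exists_isMinOn
    (Set.nonempty_Icc.2 zero_le_one) hwc.norm.continuousOn
  set m : ℝ := ‖w t₀‖ with hm
  have hm0 : 0 < m := norm_pos_iff.2 (hw0 t₀ ht₀)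
  have hmle : ∀ s ∈ Icc (0:ℝ) 1, m ≤ ‖w s‖ := fun s hs => hmin hs
  set ε : ℝ := m / (‖z‖ + 1) with hε
  have hzpos : (0:ℝ) < ‖z‖ + 1 := by positivity
  have hε0 : 0 < ε := div_pos hm0 hzpos
  set J : Set ℝ := Ioo (-ε) (1 + ε) with hJ
  have hIJ : Icc (0:ℝ) 1 ⊆ J := by
    intro t ht
    exact ⟨by linarith [ht.1], by linarith [ht.2]⟩
  -- w does not vanish on J
  have hwJ : ∀ t ∈ J, w t ≠ 0 := by
    intro t ht h
    set t' : ℝ := max 0 (min 1 t) with ht'def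
    have ht'I : t' ∈ Icc (0:ℝ) 1 :=
      ⟨le_max_left _ _, max_le (by norm_num) (min_le_left _ _)⟩
    have hdist : |t - t'| < ε := by
      rcases ht with ⟨h1, h2⟩
      rcases le_or_gt t 0 with hc | hc
      · have : t' = 0 := by
          rw [ht'def, min_eq_right (by linarith : t ≤ 1), max_eq_left hc]
        rw [this]
        rw [abs_sub_lt_iff]; constructor <;> linarith
      rcases le_or_gt t 1 with hc2 | hc2
      · have : t' = t := by
          rw [ht'def, min_eq_right hc2, max_eq_right hc.le]
        rw [this]; simpa using hε0
      · have : t' = 1 := by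
          rw [ht'def, min_eq_left hc2.le, max_eq_right (by norm_num)]
        rw [this, abs_sub_lt_iff]; constructor <;> linarith
    have hwt' : w t' = w t' - w t := by rw [h, sub_zero]
    have hsub : w t' - w t = (t' - t) • z := by
      rw [hwdef, hz]; simp only
      module
    have hnorm : ‖w t'‖ < m := by
      rw [hwt', hsub, norm_smul, Real.norm_eq_abs, abs_sub_comm]
      calc |t - t'| * ‖z‖ ≤ |t - t'| * (‖z‖ + 1) := by
            apply mul_le_mul_of_nonneg_left (by linarith) (abs_nonneg _)
        _ < ε * (‖z‖ + 1) := by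
            apply mul_lt_mul_of_pos_right hdist hzpos
        _ = m := by rw [hε]; field_simp
    exact absurd (hmle t' ht'I) (by linarith)
  have hwnJ : ∀ t ∈ J, ‖w t‖ ≠ 0 := fun t ht => norm_ne_zero_iff.2 (hwJ t ht)
  -- derivative of w
  have hw' : ∀ t : ℝ, HasDerivAt w z t := by
    intro t
    have h1 : HasDerivAt (fun s : ℝ => s • x) ((1:ℝ) • x) t := (hasDerivAt_id t).smul_const x
    have h2 : HasDerivAt (fun s : ℝ => (1 - s) • y) (((0:ℝ) - 1) • y) t :=
      ((hasDerivAt_const t (1:ℝ)).sub (hasDerivAt_id t)).smul_const y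
    have h3 := h1.add h2
    rw [hwdef, hz]
    rw [show x - y = (1:ℝ) • x + ((0:ℝ) - 1) • y by
      rw [one_smul, zero_sub, neg_one_smul, sub_eq_add_neg]]
    exact h3
  -- derivative of the norm of w
  have hu' : ∀ t ∈ J, HasDerivAt (fun s => ‖w s‖) ⟪z, v t⟫ t := by
    intro t ht
    have hq : HasDerivAt (fun s => ⟪w s, w s⟫) (⟪w t, z⟫ + ⟪z, w t⟫) t :=
      (hw' t).inner ℝ (hw' t)
    have hqt : ⟪w t, w t⟫ ≠ 0 := by
      rw [real_inner_self_eq_norm_sq]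
      exact pow_ne_zero 2 (hwnJ t ht)
    have hsq := hq.sqrt hqt
    have hsqrt : ∀ s : ℝ, Real.sqrt ⟪w s, w s⟫ = ‖w s‖ := fun s => by
      rw [real_inner_self_eq_norm_sq]; exact Real.sqrt_sq (norm_nonneg _)
    have hfun : (fun s => Real.sqrt ⟪w s, w s⟫) = fun s => ‖w s‖ := funext hsqrt
    rw [hfun, hsqrt] at hsq
    convert hsq using 1
    rw [hveq]
    simp only
    rw [real_inner_smul_right, real_inner_comm (w t) z]
    have h0 : ‖w t‖ ≠ 0 := hwnJ t ht
    field_simp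
    ring
  -- explicit derivative of v
  set F : ℝ → EuclideanSpace ℝ (Fin d) :=
    fun t => ‖w t‖⁻¹ • z + (-⟪z, v t⟫ / ‖w t‖ ^ 2) • w t with hF
  have hv' : ∀ t ∈ J, HasDerivAt v (F t) t := by
    intro t ht
    have hc : HasDerivAt (fun s => ‖w s‖⁻¹) (-⟪z, v t⟫ / ‖w t‖ ^ 2) t :=
      (hu' t ht).inv (hwnJ t ht)
    have := hc.smul (hw' t)
    rw [hveq, hF]
    exact this
  have hderiv : ∀ t ∈ J, deriv v t = F t := fun t ht => (hv' t ht).deriv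
  -- continuity facts
  have hvc : ContinuousOn v J := by
    rw [hveq]
    exact (hwc.norm.continuousOn.inv₀ hwnJ).smul hwc.continuousOn
  have hFc : ContinuousOn F J := by
    rw [hF]
    apply ContinuousOn.add
    · exact (hwc.norm.continuousOn.inv₀ hwnJ).smul continuousOn_const
    · apply ContinuousOn.fun_smul
      · apply ContinuousOn.div
        · exact (continuousOn_const.inner hvc).neg
        · exact (hwc.norm.continuousOn).pow 2
        · exact fun t ht => pow_ne_zero 2 (hwnJ t ht)
      · exact hwc.continuousOn
  have hIcc : uIcc (0:ℝ) 1 = Icc 0 1 := uIcc_of_le zero_le_one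
  have hIccJ : uIcc (0:ℝ) 1 ⊆ J := hIcc ▸ hIJ
  have hIcc2 : uIcc (1/2:ℝ) 1 ⊆ J := by
    rw [uIcc_of_le (by norm_num)]
    exact fun t ht => hIJ ⟨by linarith [ht.1], ht.2⟩
  have hIcc3 : uIcc (0:ℝ) (1/2) ⊆ J := by
    rw [uIcc_of_le (by norm_num)]
    exact fun t ht => hIJ ⟨ht.1, by linarith [ht.2]⟩
  -- FTC for the norm
  have hintvz : IntervalIntegrable (fun t => ⟪z, v t⟫) volume 0 1 :=
    (continuousOn_const.inner (hvc.mono hIccJ)).intervalIntegrable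
  have hFTCu : (∫ t in (0:ℝ)..1, ⟪z, v t⟫) = ‖x‖ - ‖y‖ := by
    have h := intervalIntegral.integral_eq_sub_of_hasDerivAt
      (f := fun s => ‖w s‖) (f' := fun t => ⟪z, v t⟫)
      (fun t ht => hu' t (hIccJ ht)) hintvz
    rw [h, hwdef]
    norm_num
  have hintv : IntervalIntegrable v volume 0 1 := (hvc.mono hIccJ).intervalIntegrable
  have hswap : (∫ t in (0:ℝ)..1, ⟪z, v t⟫) = ⟪z, ∫ t in (0:ℝ)..1, v t⟫ := by
    simpa using (innerSL ℝ z).intervalIntegral_comp_comm hintv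
  -- rewrite r using F
  have hr2 : r = ∫ t in (0:ℝ)..1,
      ((Icc (1/2:ℝ) 1).indicator (fun s => (1 - s) • F s) t
        - (Icc (0:ℝ) (1/2)).indicator (fun s => s • F s) t) := by
    rw [hr]
    apply intervalIntegral.integral_congr
    intro t ht
    have hFt : deriv v t = F t := hderiv t (hIccJ ht)
    simp only [Set.indicator]
    split_ifs <;> simp [hFt, sub_smul]
  have hFc1 : ContinuousOn (fun s => (1 - s) • F s) (Icc (0:ℝ) 1) :=
    (continuousOn_const.sub continuousOn_id).smul (hFc.mono hIJ)
  have hFc2 : ContinuousOn (fun s => s • F s) (Icc (0:ℝ) 1) :=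
    continuousOn_id.smul (hFc.mono hIJ)
  have hii1 : IntervalIntegrable ((Icc (1/2:ℝ) 1).indicator (fun s => (1 - s) • F s))
      volume 0 1 := by
    rw [intervalIntegrable_iff_integrableOn_Ioc_of_le zero_le_one]
    exact (hFc1.integrableOn_Icc.mono_set Ioc_subset_Icc_self).indicator measurableSet_Icc
  have hii2 : IntervalIntegrable ((Icc (0:ℝ) (1/2)).indicator (fun s => s • F s))
      volume 0 1 := by
    rw [intervalIntegrable_iff_integrableOn_Ioc_of_le zero_le_one]
    exact (hFc2.integrableOn_Icc.mono_set Ioc_subset_Icc_self).indicator measurableSet_Icc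
  -- evaluate the two indicator integrals
  have hA : (∫ t in (0:ℝ)..1, (Icc (1/2:ℝ) 1).indicator (fun s => (1 - s) • F s) t)
      = ∫ t in (1/2:ℝ)..1, (1 - t) • F t := by
    rw [intervalIntegral.integral_of_le zero_le_one, setIntegral_indicator measurableSet_Icc]
    have hset : Ioc (0:ℝ) 1 ∩ Icc (1/2:ℝ) 1 = Icc (1/2:ℝ) 1 := by
      apply inter_eq_right.2
      intro t ht
      exact ⟨by linarith [ht.1], ht.2⟩
    rw [hset, MeasureTheory.integral_Icc_eq_integral_Ioc,
      ← intervalIntegral.integral_of_le (by norm_num : (1/2:ℝ) ≤ 1)]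
  have hB : (∫ t in (0:ℝ)..1, (Icc (0:ℝ) (1/2)).indicator (fun s => s • F s) t)
      = ∫ t in (0:ℝ)..(1/2), t • F t := by
    rw [intervalIntegral.integral_of_le zero_le_one, setIntegral_indicator measurableSet_Icc]
    have hset : Ioc (0:ℝ) 1 ∩ Icc (0:ℝ) (1/2) = Ioc (0:ℝ) (1/2) := by
      ext t
      simp only [mem_inter_iff, mem_Ioc, mem_Icc]
      constructor
      · rintro ⟨⟨h1, h2⟩, h3, h4⟩; exact ⟨h1, h4⟩
      · rintro ⟨h1, h2⟩; exact ⟨⟨h1, by linarith⟩, by linarith, h2⟩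
    rw [hset, ← intervalIntegral.integral_of_le (by norm_num : (0:ℝ) ≤ 1/2)]
  have hr3 : r = (∫ t in (1/2:ℝ)..1, (1 - t) • F t) - ∫ t in (0:ℝ)..(1/2), t • F t := by
    rw [hr2, intervalIntegral.integral_sub hii1 hii2, hA, hB]
  -- FTC on each piece
  have hvint2 : IntervalIntegrable v volume (1/2) 1 := (hvc.mono hIcc2).intervalIntegrable
  have hvint3 : IntervalIntegrable v volume 0 (1/2) := (hvc.mono hIcc3).intervalIntegrable
  have hFint2 : IntervalIntegrable (fun t => (1 - t) • F t) volume (1/2) 1 :=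
    ((continuousOn_const.sub continuousOn_id).smul (hFc.mono hIcc2)).intervalIntegrable
  have hFint3 : IntervalIntegrable (fun t => t • F t) volume 0 (1/2) :=
    (continuousOn_id.smul (hFc.mono hIcc3)).intervalIntegrable
  have hkey1 : (∫ t in (1/2:ℝ)..1, ((1 - t) • F t + (-1:ℝ) • v t))
      = (1 - 1 : ℝ) • v 1 - (1 - 1/2 : ℝ) • v (1/2) := by
    apply intervalIntegral.integral_eq_sub_of_hasDerivAt (f := fun t => (1 - t : ℝ) • v t)
    · intro t ht
      have hc : HasDerivAt (fun s : ℝ => 1 - s) (-1:ℝ) t := by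
        exact (hasDerivAt_id' t).const_sub 1
      exact hc.smul (hv' t (hIcc2 ht))
    · exact (((continuousOn_const.sub continuousOn_id).fun_smul (hFc.mono hIcc2)).fun_add
        (continuousOn_const.fun_smul (hvc.mono hIcc2))).intervalIntegrable
  have hkey2 : (∫ t in (0:ℝ)..(1/2), (t • F t + (1:ℝ) • v t))
      = (1/2 : ℝ) • v (1/2) - (0 : ℝ) • v 0 := by
    apply intervalIntegral.integral_eq_sub_of_hasDerivAt (f := fun t => (t : ℝ) • v t)
    · intro t ht
      exact (hasDerivAt_id t).smul (hv' t (hIcc3 ht))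
    · exact ((continuousOn_id.fun_smul (hFc.mono hIcc3)).fun_add
        (continuousOn_const.fun_smul (hvc.mono hIcc3))).intervalIntegrable
  -- put the pieces together:  r = ∫₀¹ v - v (1/2)
  have hnegint : IntervalIntegrable (fun t => (-1:ℝ) • v t) volume (1/2) 1 :=
    (continuousOn_const.fun_smul (hvc.mono hIcc2)).intervalIntegrable
  have honeint : IntervalIntegrable (fun t => (1:ℝ) • v t) volume 0 (1/2) :=
    (continuousOn_const.fun_smul (hvc.mono hIcc3)).intervalIntegrable
  have hadd1 := intervalIntegral.integral_add hFint2 hnegint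
  rw [hkey1] at hadd1
  have hadd2 := intervalIntegral.integral_add hFint3 honeint
  rw [hkey2] at hadd2
  have hneg1 : (∫ t in (1/2:ℝ)..1, (-1:ℝ) • v t) = -∫ t in (1/2:ℝ)..1, v t := by
    rw [intervalIntegral.integral_smul]; module
  have hone2 : (∫ t in (0:ℝ)..(1/2), (1:ℝ) • v t) = ∫ t in (0:ℝ)..(1/2), v t := by
    rw [intervalIntegral.integral_smul]; module
  rw [hneg1] at hadd1
  rw [hone2] at hadd2
  have hsplit : (∫ t in (0:ℝ)..(1/2), v t) + (∫ t in (1/2:ℝ)..1, v t)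
      = ∫ t in (0:ℝ)..1, v t :=
    intervalIntegral.integral_add_adjacent_intervals hvint3 hvint2
  have hrval : r = (∫ t in (0:ℝ)..1, v t) - v (1/2) := by
    rw [hr3]
    have e1 : (∫ t in (1/2:ℝ)..1, (1 - t) • F t)
        = (1 - 1 : ℝ) • v 1 - (1 - 1/2 : ℝ) • v (1/2) + ∫ t in (1/2:ℝ)..1, v t := by
      rw [hadd1]; abel
    have e2 : (∫ t in (0:ℝ)..(1/2), t • F t)
        = (1/2 : ℝ) • v (1/2) - (0 : ℝ) • v 0 - ∫ t in (0:ℝ)..(1/2), v t := by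
      rw [hadd2]; abel
    rw [e1, e2, ← hsplit]
    norm_num
    module
  -- conclusion
  constructor
  · have : v (1/2) + r = ∫ t in (0:ℝ)..1, v t := by rw [hrval]; abel
    rw [this, real_inner_comm, ← hswap, hFTCu]
  · have hvnorm : ∀ t ∈ Icc (0:ℝ) 1, ‖v t‖ = 1 := by
      intro t ht
      rw [hveq]
      simp only
      rw [norm_smul, norm_inv, norm_norm,
        inv_mul_cancel₀ (norm_ne_zero_iff.2 (hw0 t ht))]
    have hnint : (∫ t in (0:ℝ)..1, ‖v t‖) = 1 := by
      rw [intervalIntegral.integral_congr (g := fun _ => (1:ℝ))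
        (fun t ht => hvnorm t (hIcc ▸ ht))]
      simp
    have h1 : ‖∫ t in (0:ℝ)..1, v t‖ ≤ 1 := by
      calc ‖∫ t in (0:ℝ)..1, v t‖ ≤ ∫ t in (0:ℝ)..1, ‖v t‖ :=
            intervalIntegral.norm_integral_le_integral_norm zero_le_one
        _ = 1 := hnint
    have h2 : ‖v (1/2)‖ = 1 := hvnorm (1/2) (by norm_num)
    rw [hrval]
    calc ‖(∫ t in (0:ℝ)..1, v t) - v (1/2)‖
        ≤ ‖∫ t in (0:ℝ)..1, v t‖ + ‖v (1/2)‖ := norm_sub_le _ _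
      _ ≤ 1 + 1 := by rw [h2]; linarith
      _ = 2 := by norm_num
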